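/- Let z be a complex number with Re(z) > 0. Then the Beta function B(z,ε) = Γ(z)Γ(ε)/Γ(z+ε) has a simple pole at ε = 0 with residue 1, and its finite part is minus the digamma value minus Euler's constant: lim_{ε→0⁺} ( Γ(z)Γ(ε)/Γ(z+ε) − 1/ε ) = −Γ′(z)/Γ(z) − γ, where γ is the Euler–Mascheroni constant. -/

import Mathlib

open Real Complex Filter Set

/-- For `Re z > 0`, the Beta function `B(z,ε) = Γ(z)Γ(ε)/Γ(z+ε)` has a simple pole at `ε = 0`
with residue `1` and finite part `−Γ′(z)/Γ(z) − γ`: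
`lim_{ε→0⁺} (Γ(z)Γ(ε)/Γ(z+ε) − 1/ε) = −Γ′(z)/Γ(z) − γ`. -/
theorem beta_finite_part (z : ℂ) (hz : 0 < z.re) :
    Tendsto
      (fun ε : ℝ =>
        Complex.Gamma z * Complex.Gamma (ε : ℂ) / Complex.Gamma (z + (ε : ℂ)) - 1 / (ε : ℂ))
      (nhdsWithin 0 (Ioi 0))
      (nhds (-(deriv Complex.Gamma z / Complex.Gamma z) -
        (Real.eulerMascheroniConstant : ℂ))) := by
  have hzne : ∀ m : ℕ, z ≠ -m := by
    intro m h
    rw [h] at hz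
    simp only [neg_re, Complex.natCast_re] at hz
    have : (0 : ℝ) ≤ m := Nat.cast_nonneg m
    linarith
  have hΓz : Complex.Gamma z ≠ 0 := Complex.Gamma_ne_zero hzne
  set g : ℂ → ℂ := fun w => Complex.Gamma z * Complex.Gamma (1 + w) / Complex.Gamma (z + w)
    with hg
  have hg0 : g 0 = 1 := by
    simp [hg, Complex.Gamma_one, div_self hΓz]
  -- derivative of g at 0
  have h1 : HasDerivAt (fun w : ℂ => Complex.Gamma (1 + w))
      (-(Real.eulerMascheroniConstant : ℂ)) 0 := by
    have h0 : HasDerivAt Complex.Gamma (-(Real.eulerMascheroniConstant : ℂ)) (1 + (0:ℂ)) := by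
      simpa using Complex.hasDerivAt_Gamma_one
    have := h0.comp 0 ((hasDerivAt_id (0 : ℂ)).const_add 1)
    simpa [Function.comp_def] using this
  have h2 : HasDerivAt (fun w : ℂ => Complex.Gamma (z + w)) (deriv Complex.Gamma z) 0 := by
    have h0 : HasDerivAt Complex.Gamma (deriv Complex.Gamma z) (z + (0:ℂ)) := by
      simpa using (Complex.differentiableAt_Gamma z hzne).hasDerivAt
    have := h0.comp 0 ((hasDerivAt_id (0 : ℂ)).const_add z)
    simpa [Function.comp_def] using this
  have hgd : HasDerivAt g
      (-(deriv Complex.Gamma z / Complex.Gamma z) - (Real.eulerMascheroniConstant : ℂ)) 0 := by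
    have h3 := (h1.const_mul (Complex.Gamma z)).div h2 (by simpa using hΓz)
    refine h3.congr_deriv ?_
    simp only [add_zero, Complex.Gamma_one, mul_one]
    field_simp
    ring
  -- restrict to reals
  have hgr : HasDerivAt (fun x : ℝ => g x)
      (-(deriv Complex.Gamma z / Complex.Gamma z) - (Real.eulerMascheroniConstant : ℂ)) 0 := by
    exact_mod_cast hgd.comp_ofReal
  have hslope := hasDerivAt_iff_tendsto_slope.mp hgr
  have hsub : nhdsWithin (0 : ℝ) (Ioi 0) ≤ nhdsWithin 0 {0}ᶜ :=
    nhdsWithin_mono 0 (fun x hx => ne_of_gt hx)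
  refine (hslope.mono_left hsub).congr' ?_
  filter_upwards [self_mem_nhdsWithin] with ε (hε : (0:ℝ) < ε)
  have hεc : (ε : ℂ) ≠ 0 := by exact_mod_cast hε.ne'
  have hΓε : Complex.Gamma ((ε : ℂ) + 1) = ε * Complex.Gamma ε := Complex.Gamma_add_one _ hεc
  rw [slope_def_module]
  simp only [Complex.ofReal_zero, sub_zero, Complex.real_smul, Complex.ofReal_inv]
  rw [hg0, hg]
  beta_reduce
  rw [add_comm (1 : ℂ) (ε : ℂ), hΓε]
  field_simp
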